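/- Let a₀, b₀ be positive integers and d ≥ 1 an integer with a₀ ≥ max(2, (d+1)/2) and b₀ ≥ max(2, (d+1)/2). If a₀b₀ - d = a₁b₁ for integers a₁, b₁ with |a₁| ≤ a₀ - 1 and |b₁| ≤ b₀ - 1, then d ≥ a₀ + b₀ - 1, and hence a₀ = b₀ = (d+1)/2 and d ≥ 3. -/
import Mathlib

/-- The key integer inequality from the rational case: if
a₀b₀ - d = a₁b₁ with |a₁| ≤ a₀ - 1 and |b₁| ≤ b₀ - 1, then
d ≥ a₀ + b₀ - 1, hence a₀ = b₀ = (d+1)/2 and d ≥ 3. -/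
theorem extremal_product_inequality
    (a₀ b₀ d a₁ b₁ : ℤ)
    (ha₀pos : 0 < a₀) (hb₀pos : 0 < b₀) (hd : 1 ≤ d)
    (ha₀ : 2 ≤ a₀) (ha₀d : d + 1 ≤ 2 * a₀)
    (hb₀ : 2 ≤ b₀) (hb₀d : d + 1 ≤ 2 * b₀)
    (heq : a₀ * b₀ - d = a₁ * b₁)
    (ha₁ : |a₁| ≤ a₀ - 1) (hb₁ : |b₁| ≤ b₀ - 1) :
    a₀ + b₀ - 1 ≤ d ∧ 2 * a₀ = d + 1 ∧ 2 * b₀ = d + 1 ∧ 3 ≤ d := by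
  have h1 : a₁ * b₁ ≤ |a₁| * |b₁| := by
    calc a₁ * b₁ ≤ |a₁ * b₁| := le_abs_self _
    _ = |a₁| * |b₁| := abs_mul _ _
  have h2 : |a₁| * |b₁| ≤ (a₀ - 1) * (b₀ - 1) :=
    mul_le_mul ha₁ hb₁ (abs_nonneg _) (by linarith)
  have hdge : a₀ + b₀ - 1 ≤ d := by nlinarith
  refine ⟨hdge, by linarith, by linarith, by linarith⟩
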